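/- The tiling 𝒲 admits a doubly periodic proper 4-colouring with respect to point-adjacency: there exist a proper 4-colouring c of the tiles of 𝒲 and two linearly independent vectors v₁, v₂ ∈ ℤ², each of which translates the set of tiles onto itself, such that c(t + v₁) = c(t) and c(t + v₂) = c(t) for every tile t. -/
import Mathlib


/-- The cells of the domino indexed by block `(i,j)` and choice `b`. -/
def tileCells (i j : ℤ) (b : Bool) : Finset (ℤ × ℤ) :=
  if (i + j) % 2 = 0 then
    -- horizontal dominoes
    if b then {(2*i, 2*j+1), (2*i+1, 2*j+1)} else {(2*i, 2*j), (2*i+1, 2*j)}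
  else
    -- vertical dominoes
    if b then {(2*i+1, 2*j), (2*i+1, 2*j+1)} else {(2*i, 2*j), (2*i, 2*j+1)}

/-- A finite set of cells is a tile of the tiling `𝒲`. -/
def IsTile (T : Finset (ℤ × ℤ)) : Prop := ∃ i j b, T = tileCells i j b

/-- The type of tiles of `𝒲`. -/
abbrev Tile := {T : Finset (ℤ × ℤ) // IsTile T}

/-- Two tiles are point-adjacent: distinct, and some cell of one is within
Chebyshev distance 1 of some cell of the other. -/
def PointAdj (T U : Tile) : Prop :=
  T ≠ U ∧ ∃ p ∈ T.1, ∃ q ∈ U.1, |p.1 - q.1| ≤ 1 ∧ |p.2 - q.2| ≤ 1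

/-- A proper 4-colouring: point-adjacent tiles get distinct colours. -/
def ProperColoring (c : Tile → Fin 4) : Prop :=
  ∀ T U, PointAdj T U → c T ≠ c U

/-- A colouring extends a seed `(S, σ)`. -/
def ExtendsSeed (S : Finset Tile) (σ : Tile → Fin 4) (c : Tile → Fin 4) : Prop :=
  ∀ T ∈ S, c T = σ T

/-- A seed is perfect if exactly one proper 4-colouring extends it. -/
def PerfectSeed (S : Finset Tile) (σ : Tile → Fin 4) : Prop :=
  ∃! c, ProperColoring c ∧ ExtendsSeed S σ c

/-- The translate of a set of cells by a vector `v`. -/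
def tileTranslate (v : ℤ × ℤ) (T : Finset (ℤ × ℤ)) : Finset (ℤ × ℤ) :=
  T.image (· + v)


/-- Cell colour: depends only on coordinates mod 4, constant on tiles. -/
def F (p : ℤ × ℤ) : ℤ :=
  if (p.1 / 2 + p.2 / 2) % 2 = 0 then p.2 % 2 else 2 + p.1 % 2

lemma F_bounds (p : ℤ × ℤ) : 0 ≤ F p ∧ F p < 4 := by
  unfold F; split_ifs <;> omega

lemma F_const {i j : ℤ} {b : Bool} {p q : ℤ × ℤ}
    (hp : p ∈ tileCells i j b) (hq : q ∈ tileCells i j b) : F p = F q := by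
  rcases b <;> simp only [tileCells] at hp hq <;> split_ifs at hp hq <;>
    (try (exfalso; assumption)) <;>
    simp only [Finset.mem_insert, Finset.mem_singleton] at hp hq <;>
    rcases hp with rfl | rfl <;> rcases hq with rfl | rfl <;>
    simp only [F] <;> split_ifs <;> omega

set_option maxHeartbeats 1600000 in
lemma key {i j i' j' : ℤ} {b b' : Bool} {p q : ℤ × ℤ}
    (hp : p ∈ tileCells i j b) (hq : q ∈ tileCells i' j' b')
    (h1 : |p.1 - q.1| ≤ 1) (h2 : |p.2 - q.2| ≤ 1) (hF : F p = F q) :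
    tileCells i j b = tileCells i' j' b' := by
  rw [abs_le] at h1 h2
  obtain ⟨rfl, rfl, rfl⟩ : b = b' ∧ i = i' ∧ j = j' := by
    rcases b <;> rcases b' <;> simp only [tileCells] at hp hq <;>
      split_ifs at hp hq <;>
      (try (exfalso; assumption)) <;>
      simp only [Finset.mem_insert, Finset.mem_singleton] at hp hq <;>
      rcases hp with rfl | rfl <;> rcases hq with rfl | rfl <;>
      simp only [F] at hF h1 h2 <;> split_ifs at hF <;>
      first
        | exact ⟨rfl, by omega, by omega⟩
        | (exfalso; omega)
  rfl

lemma tile_nonempty (T : Tile) : T.1.Nonempty := by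
  obtain ⟨i, j, b, h⟩ := T.2
  rw [h]; unfold tileCells; split_ifs <;> exact ⟨_, Finset.mem_insert_self _ _⟩

/-- The colouring: value of `F` at a cell of the tile. -/
noncomputable def col (T : Tile) : Fin 4 :=
  ⟨(F (tile_nonempty T).choose).toNat % 4, Nat.mod_lt _ (by norm_num)⟩

lemma F_const' (T : Tile) {p q : ℤ × ℤ} (hp : p ∈ T.1) (hq : q ∈ T.1) :
    F p = F q := by
  obtain ⟨i, j, b, h⟩ := T.2
  rw [h] at hp hq
  exact F_const hp hq

lemma col_val (T : Tile) {p : ℤ × ℤ} (hp : p ∈ T.1) :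
    (col T).1 = (F p).toNat % 4 := by
  have hc : (tile_nonempty T).choose ∈ T.1 := (tile_nonempty T).choose_spec
  unfold col
  exact congrArg (fun z : ℤ => z.toNat % 4) (F_const' T hc hp)

lemma F_shift (p : ℤ × ℤ) (v : ℤ × ℤ) (hv : v = (4, 0) ∨ v = (0, 4)) :
    F (p + v) = F p := by
  rcases hv with rfl | rfl <;>
    simp only [F, Prod.fst_add, Prod.snd_add] <;> norm_num <;>
    split_ifs <;> omega

lemma tileCells_shift₁ (i j : ℤ) (b : Bool) :
    tileTranslate (4, 0) (tileCells i j b) = tileCells (i + 2) j b := by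
  have h2 : (i + 2 + j) % 2 = (i + j) % 2 := by omega
  rcases b <;> unfold tileTranslate tileCells <;> rw [h2] <;> split_ifs <;>
    (ext ⟨x, y⟩; simp [Prod.ext_iff]; omega)

lemma tileCells_shift₂ (i j : ℤ) (b : Bool) :
    tileTranslate (0, 4) (tileCells i j b) = tileCells i (j + 2) b := by
  have h2 : (i + (j + 2)) % 2 = (i + j) % 2 := by omega
  rcases b <;> unfold tileTranslate tileCells <;> rw [h2] <;> split_ifs <;>
    (ext ⟨x, y⟩; simp [Prod.ext_iff]; omega)

lemma col_periodic (v : ℤ × ℤ) (hv : v = (4, 0) ∨ v = (0, 4))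
    (t t' : Tile) (h : t'.1 = tileTranslate v t.1) : col t' = col t := by
  have hp : (tile_nonempty t).choose ∈ t.1 := (tile_nonempty t).choose_spec
  have hp' : (tile_nonempty t).choose + v ∈ t'.1 := by
    rw [h]; exact Finset.mem_image_of_mem _ hp
  apply Fin.ext
  rw [col_val t' hp', col_val t hp, F_shift _ _ hv]

lemma proper_col : ProperColoring col := by
  intro T U hadj hc
  obtain ⟨hne, p, hp, q, hq, h1, h2⟩ := hadj
  obtain ⟨i, j, b, hT⟩ := T.2
  obtain ⟨i', j', b', hU⟩ := U.2
  have hv1 := col_val T hp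
  have hv2 := col_val U hq
  rw [hc] at hv1
  have hFp := F_bounds p
  have hFq := F_bounds q
  have hF : F p = F q := by omega
  rw [hT] at hp; rw [hU] at hq
  exact hne (Subtype.ext (by rw [hT, hU, key hp hq h1 h2 hF]))


/-- The tiling `𝒲` admits a doubly periodic proper 4-colouring for
point-adjacency: a proper 4-colouring invariant under translation by two
linearly independent vectors, each mapping the set of tiles onto itself. -/
theorem exists_doubly_periodic_proper_coloring :
    ∃ (c : Tile → Fin 4) (v₁ v₂ : ℤ × ℤ),
      ProperColoring c ∧ LinearIndependent ℤ ![v₁, v₂] ∧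
      (tileTranslate v₁ '' {T | IsTile T} = {T | IsTile T}) ∧
      (tileTranslate v₂ '' {T | IsTile T} = {T | IsTile T}) ∧
      (∀ t t' : Tile, t'.1 = tileTranslate v₁ t.1 → c t' = c t) ∧
      (∀ t t' : Tile, t'.1 = tileTranslate v₂ t.1 → c t' = c t) := by
  refine ⟨col, (4, 0), (0, 4), proper_col, ?_, ?_, ?_,
    fun t t' h => col_periodic _ (Or.inl rfl) t t' h,
    fun t t' h => col_periodic _ (Or.inr rfl) t t' h⟩
  · rw [LinearIndependent.pair_iff]
    intro s t h
    simp [Prod.ext_iff] at h; omega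
  · ext T
    constructor
    · rintro ⟨S, ⟨i, j, b, rfl⟩, rfl⟩
      exact ⟨i + 2, j, b, tileCells_shift₁ i j b⟩
    · rintro ⟨i, j, b, rfl⟩
      refine ⟨tileCells (i - 2) j b, ⟨i - 2, j, b, rfl⟩, ?_⟩
      rw [tileCells_shift₁]; norm_num
  · ext T
    constructor
    · rintro ⟨S, ⟨i, j, b, rfl⟩, rfl⟩
      exact ⟨i, j + 2, b, tileCells_shift₂ i j b⟩
    · rintro ⟨i, j, b, rfl⟩
      refine ⟨tileCells i (j - 2) b, ⟨i, j - 2, b, rfl⟩, ?_⟩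
      rw [tileCells_shift₂]; norm_num
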